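/- Let S ≥ 1 and M be natural numbers and let a_0, …, a_M be nonnegative real numbers with Σ_{i=0}^{M} a_i = 1 and Σ_{i=0}^{M} i·a_i < S. Then the complex polynomial P(z) = z^S − Σ_{i=0}^{M} a_i z^i has exactly S roots, counted with multiplicity, in the closed unit disc {z ∈ ℂ : |z| ≤ 1}. -/

import Mathlib

open Polynomial Filter Finset

namespace RD
noncomputable def PA (M : ℕ) (a : ℕ → ℝ) : Polynomial ℂ :=
  ∑ i ∈ Finset.range (M+1), C ((a i : ℂ)) * X ^ i

lemma evalA (M : ℕ) (a : ℕ → ℝ) (z : ℂ) :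
    (PA M a).eval z = ∑ i ∈ Finset.range (M+1), (a i : ℂ) * z ^ i := by
  simp [PA, eval_finset_sum]

lemma coeffA (M : ℕ) (a : ℕ → ℝ) (k : ℕ) :
    (PA M a).coeff k = if k ≤ M then (a k : ℂ) else 0 := by
  simp only [PA, finset_sum_coeff, coeff_C_mul, coeff_X_pow, mul_ite, mul_one, mul_zero]
  rw [Finset.sum_ite_eq (Finset.range (M+1)) k]
  simp [Nat.lt_succ_iff]

end RD

namespace RD
open Complex

noncomputable def Complex.abs : AbsoluteValue ℂ ℝ := IsAbsoluteValue.toAbsoluteValue (norm : ℂ → ℝ)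
lemma Complex.abs_apply (z : ℂ) : Complex.abs z = ‖z‖ := rfl
lemma Complex.abs_ofReal (r : ℝ) : Complex.abs (r : ℂ) = |r| := by
  rw [Complex.abs_apply, Complex.norm_real, Real.norm_eq_abs]
lemma Complex.norm_eq_abs (z : ℂ) : ‖z‖ = Complex.abs z := rfl
lemma Complex.sq_abs (z : ℂ) : Complex.abs z ^ 2 = Complex.normSq z := Complex.sq_norm z
lemma Complex.re_le_abs (z : ℂ) : z.re ≤ Complex.abs z := Complex.re_le_norm z
lemma Complex.abs_conj (z : ℂ) : Complex.abs ((starRingEnd ℂ) z) = Complex.abs z := Complex.norm_conj z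
lemma Complex.continuous_abs : Continuous Complex.abs := continuous_norm
@[simp] lemma Complex.abs_two : Complex.abs 2 = 2 := by
  rw [Complex.abs_apply]; norm_num

lemma a_le_one (M : ℕ) (a : ℕ → ℝ) (hnn : ∀ i ∈ Finset.range (M + 1), 0 ≤ a i)
    (hsum : ∑ i ∈ Finset.range (M + 1), a i = 1) {i : ℕ} (hi : i ∈ Finset.range (M+1)) :
    a i ≤ 1 := by
  rw [← hsum]
  exact Finset.single_le_sum hnn hi

lemma absA_le (M : ℕ) (a : ℕ → ℝ) (hnn : ∀ i ∈ Finset.range (M + 1), 0 ≤ a i) (z : ℂ) :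
    Complex.abs ((PA M a).eval z) ≤ ∑ i ∈ Finset.range (M+1), a i * (Complex.abs z)^i := by
  rw [evalA]
  refine le_trans (Complex.abs.sum_le _ _) ?_
  refine Finset.sum_le_sum fun i hi => ?_
  rw [map_mul, map_pow]
  rw [Complex.abs_ofReal, _root_.abs_of_nonneg (hnn i hi)]

/-- the easy case: all mass at indices ≤ S -/
lemma easy_case (S M : ℕ) (hS : 1 ≤ S) (a : ℕ → ℝ)
    (ha_nonneg : ∀ i ∈ Finset.range (M + 1), 0 ≤ a i)
    (ha_sum : ∑ i ∈ Finset.range (M + 1), a i = 1)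
    (ha_mean : ∑ i ∈ Finset.range (M + 1), (i : ℝ) * a i < S)
    (hc : ∀ i ∈ Finset.range (M+1), S < i → a i = 0) :
    Multiset.card (((X ^ S - PA M a).roots).filter (fun z => Complex.abs z ≤ 1)) = S := by
  set P : Polynomial ℂ := X ^ S - PA M a with hP
  -- a S ≠ 1 (if S ≤ M)
  have haS : ∀ i ∈ Finset.range (M+1), i < S → 0 < a i → True := fun _ _ _ _ => trivial
  have hnotall : ¬ (∀ i ∈ Finset.range (M+1), i < S → a i = 0) := by
    intro h
    have : ∑ i ∈ Finset.range (M + 1), (i:ℝ) * a i = S * ∑ i ∈ Finset.range (M + 1), a i := by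
      rw [Finset.mul_sum]
      refine Finset.sum_congr rfl fun i hi => ?_
      rcases lt_trichotomy i S with h1 | h1 | h1
      · rw [h i hi h1]; ring
      · rw [h1]
      · rw [hc i hi h1]; ring
    rw [this, ha_sum, mul_one] at ha_mean
    exact lt_irrefl _ ha_mean
  push_neg at hnotall
  obtain ⟨i0, hi0m, hi0S, hi0⟩ := hnotall
  have hi0pos : 0 < a i0 := lt_of_le_of_ne (ha_nonneg i0 hi0m) (Ne.symm hi0)
  -- coefficient of P
  have hcoeff : ∀ k, P.coeff k = (if k = S then 1 else 0) - (if k ≤ M then (a k : ℂ) else 0) := by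
    intro k
    rw [hP, coeff_sub, coeff_X_pow, coeffA]
  have hcoeffS : P.coeff S ≠ 0 := by
    rw [hcoeff S, if_pos rfl]
    by_cases h : S ≤ M
    · rw [if_pos h]
      intro hcon
      have : (a S : ℂ) = 1 := by linear_combination -hcon
      have haS1 : a S = 1 := by exact_mod_cast this
      -- then all other a i = 0
      have hzero : ∀ i ∈ Finset.range (M+1), i ≠ S → a i = 0 := by
        intro i hi hne
        by_contra hne0
        have hpos : 0 < a i := lt_of_le_of_ne (ha_nonneg i hi) (Ne.symm hne0)
        have hSm : S ∈ Finset.range (M+1) := by simp [Nat.lt_succ_iff, h]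
        have : a S + a i ≤ ∑ j ∈ Finset.range (M + 1), a j := by
          rw [← Finset.sum_pair (Ne.symm hne)]
          refine Finset.sum_le_sum_of_subset_of_nonneg ?_ (fun j hj _ => ha_nonneg j hj)
          intro j hj
          simp only [Finset.mem_insert, Finset.mem_singleton] at hj
          rcases hj with rfl | rfl
          · exact hSm
          · exact hi
        rw [ha_sum, haS1] at this
        linarith
      exact hi0 (hzero i0 hi0m (Nat.ne_of_lt hi0S))
    · rw [if_neg h]; norm_num
  have hPne : P ≠ 0 := fun h => hcoeffS (by rw [h]; simp)
  have hdegle : P.natDegree ≤ S := by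
    rw [natDegree_le_iff_coeff_eq_zero]
    intro k hk
    rw [hcoeff k, if_neg (Nat.ne_of_gt hk)]
    by_cases h : k ≤ M
    · rw [if_pos h]
      rw [hc k (by simp [Nat.lt_succ_iff, h]) hk]
      simp
    · rw [if_neg h]; simp
  have hdeg : P.natDegree = S :=
    le_antisymm hdegle (le_natDegree_of_ne_zero hcoeffS)
  -- all roots in closed disc
  have hroots : ∀ z ∈ P.roots, Complex.abs z ≤ 1 := by
    intro z hz
    by_contra hgt
    push_neg at hgt
    have hzr : P.eval z = 0 := (mem_roots hPne).1 hz
    have hzS : z ^ S = (PA M a).eval z := by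
      have : eval z (X ^ S - PA M a) = 0 := hzr
      rw [eval_sub, eval_pow, eval_X] at this
      exact sub_eq_zero.mp this
    have h1 : (Complex.abs z)^S = Complex.abs ((PA M a).eval z) := by
      rw [← hzS, map_pow]
    have h2 : Complex.abs ((PA M a).eval z) ≤ ∑ i ∈ Finset.range (M+1), a i * (Complex.abs z)^i :=
      absA_le M a ha_nonneg z
    have h3 : ∑ i ∈ Finset.range (M+1), a i * (Complex.abs z)^i
        < ∑ i ∈ Finset.range (M+1), a i * (Complex.abs z)^S := by
      refine Finset.sum_lt_sum (fun i hi => ?_) ⟨i0, hi0m, ?_⟩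
      · rcases le_or_gt i S with h | h
        · exact mul_le_mul_of_nonneg_left
            (pow_le_pow_right₀ (le_of_lt hgt) h) (ha_nonneg i hi)
        · rw [hc i hi h]; simp
      · exact mul_lt_mul_of_pos_left (pow_lt_pow_right₀ hgt hi0S) hi0pos
    rw [← Finset.sum_mul] at h3
    rw [ha_sum, one_mul] at h3
    have := h1 ▸ h2
    linarith
  -- conclude
  have hfilter : (P.roots).filter (fun z => Complex.abs z ≤ 1) = P.roots :=
    Multiset.filter_eq_self.mpr hroots
  rw [hfilter, ← hdeg]
  exact (splits_iff_card_roots.mp (IsAlgClosed.splits P))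

end RD

namespace RD

noncomputable def Ps (S M D : ℕ) (a : ℕ → ℝ) (s : ℝ) : Polynomial ℂ :=
  X ^ S - (∑ i ∈ Finset.range (M+1), C ((((1 - s) * a i : ℝ)) : ℂ) * X ^ i)
    - C ((s/2 : ℝ) : ℂ) * X ^ D

lemma Ps_zero (S M D : ℕ) (a : ℕ → ℝ) : Ps S M D a 0 = X ^ S - PA M a := by
  simp [Ps, PA]

lemma evalPs (S M D : ℕ) (a : ℕ → ℝ) (s : ℝ) (z : ℂ) :
    (Ps S M D a s).eval z
      = z ^ S - ((1 - s : ℝ) : ℂ) * ∑ i ∈ Finset.range (M+1), (a i : ℂ) * z ^ i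
        - ((s/2 : ℝ) : ℂ) * z ^ D := by
  simp only [Ps, eval_sub, eval_pow, eval_X, eval_mul, eval_C, eval_finset_sum]
  rw [Finset.mul_sum]
  push_cast
  ring_nf

lemma coeffPs (S M D : ℕ) (a : ℕ → ℝ) (s : ℝ) (k : ℕ) :
    (Ps S M D a s).coeff k = (if k = S then 1 else 0)
      - (if k ≤ M then (((1 - s) * a k : ℝ) : ℂ) else 0)
      - (if k = D then ((s/2 : ℝ) : ℂ) else 0) := by
  simp only [Ps, coeff_sub, coeff_X_pow, coeff_C_mul]
  congr 1
  · congr 1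
    · simp only [finset_sum_coeff, coeff_C_mul, coeff_X_pow, mul_ite, mul_one, mul_zero]
      rw [Finset.sum_ite_eq (Finset.range (M+1)) k]
      simp [Nat.lt_succ_iff]
  · by_cases h : k = D
    · subst h; simp
    · rw [if_neg h, if_neg h, mul_zero]

section Hard
variable (S M D : ℕ) (a : ℕ → ℝ)

lemma lead_pos (haD : 0 < a D) {s : ℝ} (hs0 : 0 ≤ s) (hs1 : s ≤ 1) :
    0 < (1 - s) * a D + s / 2 := by
  rcases eq_or_lt_of_le hs0 with h | h
  · rw [← h]; simpa using haD
  · nlinarith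

lemma coeffPs_D (hSD : S < D) (hDM : D ≤ M) (s : ℝ) :
    (Ps S M D a s).coeff D = -((((1 - s) * a D + s / 2 : ℝ)) : ℂ) := by
  rw [coeffPs, if_neg (by omega : ¬ D = S), if_pos hDM, if_pos rfl]
  push_cast; ring

lemma natDegree_Ps (hSD : S < D) (hDM : D ≤ M) (haD : 0 < a D)
    (hhi : ∀ i, D < i → i ≤ M → a i = 0) {s : ℝ} (hs0 : 0 ≤ s) (hs1 : s ≤ 1) :
    (Ps S M D a s).natDegree = D ∧ (Ps S M D a s).coeff D ≠ 0 := by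
  have hcd : (Ps S M D a s).coeff D ≠ 0 := by
    rw [coeffPs_D S M D a hSD hDM]
    have := lead_pos D a haD hs0 hs1
    simp only [ne_eq, neg_eq_zero]
    exact_mod_cast ne_of_gt this
  constructor
  · refine le_antisymm ?_ (le_natDegree_of_ne_zero hcd)
    rw [natDegree_le_iff_coeff_eq_zero]
    intro k hk
    rw [coeffPs, if_neg (by omega : ¬ k = S), if_neg (by omega : ¬ k = D)]
    by_cases h : k ≤ M
    · rw [if_pos h, hhi k hk h]
      push_cast; ring
    · rw [if_neg h]; ring
  · exact hcd

lemma Ps_ne_zero (hSD : S < D) (hDM : D ≤ M) (haD : 0 < a D)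
    (hhi : ∀ i, D < i → i ≤ M → a i = 0) {s : ℝ} (hs0 : 0 ≤ s) (hs1 : s ≤ 1) :
    Ps S M D a s ≠ 0 := fun h =>
  (natDegree_Ps S M D a hSD hDM haD hhi hs0 hs1).2 (by rw [h]; simp)

lemma card_roots_Ps (hSD : S < D) (hDM : D ≤ M) (haD : 0 < a D)
    (hhi : ∀ i, D < i → i ≤ M → a i = 0) {s : ℝ} (hs0 : 0 ≤ s) (hs1 : s ≤ 1) :
    Multiset.card (Ps S M D a s).roots = D := by
  rw [splits_iff_card_roots.mp (IsAlgClosed.splits _),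
    (natDegree_Ps S M D a hSD hDM haD hhi hs0 hs1).1]

lemma no_circle_roots (ha_nonneg : ∀ i ∈ Finset.range (M + 1), 0 ≤ a i)
    (ha_sum : ∑ i ∈ Finset.range (M + 1), a i = 1)
    {s : ℝ} (hs0 : 0 < s) (hs1 : s ≤ 1) {z : ℂ}
    (hz : (Ps S M D a s).eval z = 0) : Complex.abs z ≠ 1 := by
  intro habs
  rw [evalPs] at hz
  have hz' : z ^ S = ((1 - s : ℝ) : ℂ) * ∑ i ∈ Finset.range (M+1), (a i : ℂ) * z ^ i
      + ((s/2 : ℝ) : ℂ) * z ^ D := by linear_combination hz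
  have h1 : Complex.abs (z ^ S) = 1 := by rw [map_pow, habs, one_pow]
  have hsum : Complex.abs (∑ i ∈ Finset.range (M+1), (a i : ℂ) * z ^ i) ≤ 1 := by
    have := absA_le M a ha_nonneg z
    rw [evalA] at this
    refine le_trans this (le_of_eq ?_)
    rw [← ha_sum]
    exact Finset.sum_congr rfl fun i _ => by rw [habs, one_pow, mul_one]
  have h2 : Complex.abs (z ^ S) ≤ (1 - s) + s/2 := by
    rw [hz']
    refine le_trans (Complex.abs.add_le _ _) ?_
    rw [map_mul, map_mul, map_pow, habs, one_pow, mul_one]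
    have e1 : Complex.abs ((1 - s : ℝ) : ℂ) = 1 - s := by
      rw [Complex.abs_ofReal, _root_.abs_of_nonneg (by linarith)]
    have e2 : Complex.abs ((s/2 : ℝ) : ℂ) = s/2 := by
      rw [Complex.abs_ofReal, _root_.abs_of_nonneg (by linarith)]
    rw [e1, e2]
    nlinarith [Complex.abs.nonneg (∑ i ∈ Finset.range (M+1), (a i : ℂ) * z ^ i)]
  rw [h1] at h2
  linarith

end Hard

section Bound
variable (S M D : ℕ) (a : ℕ → ℝ)

lemma root_bound (hSD : S < D) (hDM : D ≤ M) (haD : 0 < a D)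
    (hhi : ∀ i, D < i → i ≤ M → a i = 0)
    (ha_nonneg : ∀ i ∈ Finset.range (M + 1), 0 ≤ a i)
    (ha_sum : ∑ i ∈ Finset.range (M + 1), a i = 1)
    {s : ℝ} (hs0 : 0 ≤ s) (hs1 : s ≤ 1) {z : ℂ}
    (hz : (Ps S M D a s).eval z = 0) :
    Complex.abs z ≤ max 1 (2 / min (a D) (1/2)) := by
  set δ : ℝ := min (a D) (1/2) with hδdef
  have hδ : 0 < δ := lt_min haD (by norm_num)
  by_contra hcon
  push_neg at hcon
  set t : ℝ := Complex.abs z with htdef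
  have ht1 : 1 < t := lt_of_le_of_lt (le_max_left _ _) hcon
  have ht2 : 2/δ < t := lt_of_le_of_lt (le_max_right _ _) hcon
  have ht0 : 0 < t := by linarith
  have hDmem : D ∈ Finset.range (M+1) := by simp [Nat.lt_succ_iff, hDM]
  rw [evalPs] at hz
  have hsplit : ∑ i ∈ Finset.range (M+1), (a i : ℂ) * z ^ i
      = (a D : ℂ) * z ^ D + ∑ i ∈ (Finset.range (M+1)).erase D, (a i : ℂ) * z ^ i :=
    (Finset.add_sum_erase _ _ hDmem).symm
  have hkey : (((1 - s) * a D + s/2 : ℝ) : ℂ) * z ^ D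
      = z ^ S - ((1 - s : ℝ) : ℂ) * ∑ i ∈ (Finset.range (M+1)).erase D, (a i : ℂ) * z ^ i := by
    push_cast
    push_cast at hz
    linear_combination -hz - ((1:ℂ) - s) * hsplit
  -- take absolute values
  have habs1 : ((1 - s) * a D + s/2) * t ^ D
      = Complex.abs ((((1 - s) * a D + s/2 : ℝ) : ℂ) * z ^ D) := by
    rw [map_mul, map_pow, Complex.abs_ofReal, _root_.abs_of_nonneg]
    nlinarith
  have hub : Complex.abs (z ^ S - ((1 - s : ℝ) : ℂ)
      * ∑ i ∈ (Finset.range (M+1)).erase D, (a i : ℂ) * z ^ i) ≤ 2 * t ^ (D - 1) := by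
    refine le_trans (Complex.abs.sub_le_add _ _) ?_
    have e1 : Complex.abs (z ^ S) ≤ t ^ (D-1) := by
      rw [map_pow]
      exact pow_le_pow_right₀ (le_of_lt ht1) (by omega)
    have e2 : Complex.abs (((1 - s : ℝ) : ℂ)
        * ∑ i ∈ (Finset.range (M+1)).erase D, (a i : ℂ) * z ^ i) ≤ t ^ (D-1) := by
      rw [map_mul, Complex.abs_ofReal, _root_.abs_of_nonneg (by linarith)]
      have e3 : Complex.abs (∑ i ∈ (Finset.range (M+1)).erase D, (a i : ℂ) * z ^ i)
          ≤ ∑ i ∈ (Finset.range (M+1)).erase D, a i * t ^ (D-1) := by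
        refine le_trans (Complex.abs.sum_le _ _) (Finset.sum_le_sum fun i hi => ?_)
        rw [map_mul, map_pow, Complex.abs_ofReal,
          _root_.abs_of_nonneg (ha_nonneg i (Finset.mem_of_mem_erase hi))]
        rcases lt_or_gt_of_ne (Finset.ne_of_mem_erase hi) with h | h
        · exact mul_le_mul_of_nonneg_left
            (pow_le_pow_right₀ (le_of_lt ht1) (by omega))
            (ha_nonneg i (Finset.mem_of_mem_erase hi))
        · rw [hhi i h (by have := Finset.mem_of_mem_erase hi; simp [Nat.lt_succ_iff] at this; exact this)]
          simp [le_of_lt (pow_pos ht0 _)]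
      rw [← Finset.sum_mul] at e3
      have e4 : ∑ i ∈ (Finset.range (M+1)).erase D, a i ≤ 1 := by
        rw [← ha_sum]
        exact Finset.sum_le_sum_of_subset_of_nonneg (Finset.erase_subset _ _)
          (fun j hj _ => ha_nonneg j hj)
      have e5 : Complex.abs (∑ i ∈ (Finset.range (M+1)).erase D, (a i : ℂ) * z ^ i)
          ≤ t ^ (D-1) := le_trans e3 (by nlinarith [pow_pos ht0 (D-1)])
      nlinarith [Complex.abs.nonneg (∑ i ∈ (Finset.range (M+1)).erase D, (a i : ℂ) * z ^ i),
        pow_pos ht0 (D-1)]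
    linarith
  have hfin : δ * t ^ D ≤ 2 * t ^ (D-1) := by
    have h1 : δ ≤ (1 - s) * a D + s/2 := by
      have h2 : δ ≤ a D := min_le_left _ _
      have h3 : δ ≤ 1/2 := min_le_right _ _
      nlinarith
    calc δ * t ^ D ≤ ((1 - s) * a D + s/2) * t ^ D := by nlinarith [pow_pos ht0 D]
    _ = Complex.abs ((((1 - s) * a D + s/2 : ℝ) : ℂ) * z ^ D) := habs1
    _ ≤ 2 * t ^ (D - 1) := by rw [hkey]; exact hub
  have hpow : t ^ D = t ^ (D-1) * t := by
    rw [← pow_succ]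
    congr 1
    omega
  rw [hpow] at hfin
  have hposD : 0 < t ^ (D-1) := pow_pos ht0 _
  have : δ * t ≤ 2 := by
    have := mul_le_mul_of_nonneg_right hfin (le_of_lt (inv_pos.mpr hposD))
    rw [mul_comm (2:ℝ) _] at this
    calc δ * t = δ * (t ^ (D-1) * t) * (t ^ (D-1))⁻¹ := by field_simp
    _ ≤ t ^ (D-1) * 2 * (t ^ (D-1))⁻¹ := this
    _ = 2 := by field_simp
  have : t ≤ 2/δ := by
    rw [le_div_iff₀ hδ]; linarith
  linarith

end Bound

section Helpers

lemma exists_vector {m : Multiset ℂ} {n : ℕ} (h : Multiset.card m = n) :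
    ∃ v : Fin n → ℂ, m = ↑(List.ofFn v) := by
  obtain ⟨L, hL⟩ : ∃ L : List ℂ, m = ↑L := ⟨m.toList, (Multiset.coe_toList m).symm⟩
  subst hL
  have hlen : L.length = n := by simpa using h
  subst hlen
  exact ⟨L.get, by rw [List.ofFn_get]⟩

lemma mem_ofFn' {n : ℕ} (v : Fin n → ℂ) (j : Fin n) : v j ∈ (↑(List.ofFn v) : Multiset ℂ) := by
  simp [List.mem_ofFn]

lemma eval_eq_prod (p : Polynomial ℂ) {n : ℕ} (v : Fin n → ℂ)
    (hroots : p.roots = ↑(List.ofFn v)) (z : ℂ) :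
    p.eval z = p.leadingCoeff * ∏ j, (z - v j) := by
  conv_lhs => rw [(IsAlgClosed.splits p).eq_prod_roots]
  rw [hroots, eval_mul, eval_C, Multiset.map_coe, Multiset.prod_coe, eval_list_prod,
    List.map_map, List.map_ofFn]
  congr 1
  rw [← List.prod_ofFn]
  exact congrArg List.prod (congrArg List.ofFn (funext fun j => by
    simp [Function.comp]))

lemma roots_of_prod {n : ℕ} (lc : ℂ) (hlc : lc ≠ 0) (v : Fin n → ℂ) :
    (C lc * (Multiset.map (fun r => X - C r) ↑(List.ofFn v)).prod).roots
      = ↑(List.ofFn v) := by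
  rw [roots_C_mul _ hlc, roots_multiset_prod_X_sub_C]

lemma eval_prod_poly {n : ℕ} (lc : ℂ) (v : Fin n → ℂ) (z : ℂ) :
    (C lc * (Multiset.map (fun r => X - C r) ↑(List.ofFn v)).prod).eval z
      = lc * ∏ j, (z - v j) := by
  rw [eval_mul, eval_C, Multiset.map_coe, Multiset.prod_coe, eval_list_prod,
    List.map_map, List.map_ofFn]
  congr 1
  rw [← List.prod_ofFn]
  exact congrArg List.prod (congrArg List.ofFn (funext fun j => by
    simp [Function.comp]))

lemma count_filter_ofFn {n : ℕ} (v : Fin n → ℂ) (q : ℂ → Prop) [DecidablePred q] :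
    Multiset.card (Multiset.filter q ↑(List.ofFn v))
      = (Finset.univ.filter (fun j => q (v j))).card := by
  have h1 : (↑(List.ofFn v) : Multiset ℂ) = Multiset.map v Finset.univ.val := by
    rw [List.ofFn_eq_map, ← Multiset.map_coe]
    congr 1
  rw [h1, ← Multiset.countP_eq_card_filter, Multiset.countP_map]
  rfl

end Helpers

section Conv
variable (S M D : ℕ) (a : ℕ → ℝ)

lemma key_conv (hSD : S < D) (hDM : D ≤ M) (haD : 0 < a D)
    (hhi : ∀ i, D < i → i ≤ M → a i = 0)
    (ha_nonneg : ∀ i ∈ Finset.range (M + 1), 0 ≤ a i)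
    (ha_sum : ∑ i ∈ Finset.range (M + 1), a i = 1)
    (s : ℕ → ℝ) (hs : ∀ n, 0 ≤ s n ∧ s n ≤ 1)
    {s0 : ℝ} (hs00 : 0 ≤ s0) (hs01 : s0 ≤ 1)
    (hlim : Filter.Tendsto s atTop (nhds s0))
    (x : ℕ → Fin D → ℂ) (hx : ∀ n, (Ps S M D a (s n)).roots = ↑(List.ofFn (x n))) :
    ∃ φ : ℕ → ℕ, StrictMono φ ∧ ∃ v : Fin D → ℂ,
      (Ps S M D a s0).roots = ↑(List.ofFn v) ∧
      ∀ j, Filter.Tendsto (fun k => x (φ k) j) atTop (nhds (v j)) := by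
  set R : ℝ := max 1 (2 / min (a D) (1/2)) with hRdef
  have hR0 : (0:ℝ) ≤ R := le_trans zero_le_one (le_max_left _ _)
  have hmem : ∀ n, x n ∈ Metric.closedBall (0 : Fin D → ℂ) R := by
    intro n
    rw [mem_closedBall_zero_iff]
    rw [pi_norm_le_iff_of_nonneg hR0]
    intro j
    have hroot : x n j ∈ (Ps S M D a (s n)).roots := by
      rw [hx n]; exact mem_ofFn' (x n) j
    have heval : (Ps S M D a (s n)).eval (x n j) = 0 :=
      (mem_roots (Ps_ne_zero S M D a hSD hDM haD hhi (hs n).1 (hs n).2)).1 hroot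
    rw [Complex.norm_eq_abs]
    exact root_bound S M D a hSD hDM haD hhi ha_nonneg ha_sum (hs n).1 (hs n).2 heval
  obtain ⟨v, hvmem, φ, hφ, htend⟩ :=
    (isCompact_closedBall (0 : Fin D → ℂ) R).tendsto_subseq hmem
  have hcomp : ∀ j, Filter.Tendsto (fun k => x (φ k) j) atTop (nhds (v j)) := by
    intro j
    exact (tendsto_pi_nhds.mp htend) j
  have hsφ : Filter.Tendsto (fun k => s (φ k)) atTop (nhds s0) :=
    hlim.comp hφ.tendsto_atTop
  set lc0 : ℂ := -((((1 - s0) * a D + s0 / 2 : ℝ)) : ℂ) with hlc0def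
  have hlc0 : lc0 ≠ 0 := by
    have := lead_pos D a haD hs00 hs01
    simp only [hlc0def, ne_eq, neg_eq_zero]
    exact_mod_cast ne_of_gt this
  have hlead : ∀ n, (Ps S M D a (s n)).leadingCoeff
      = -((((1 - s n) * a D + s n / 2 : ℝ)) : ℂ) := by
    intro n
    rw [leadingCoeff, (natDegree_Ps S M D a hSD hDM haD hhi (hs n).1 (hs n).2).1,
      coeffPs_D S M D a hSD hDM]
  have hlctend : Filter.Tendsto (fun k => (Ps S M D a (s (φ k))).leadingCoeff)
      atTop (nhds lc0) := by
    simp only [hlead]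
    have hreal : Filter.Tendsto (fun k => (1 - s (φ k)) * a D + s (φ k) / 2)
        atTop (nhds ((1 - s0) * a D + s0 / 2)) := by
      exact (((tendsto_const_nhds.sub hsφ).mul tendsto_const_nhds).add (hsφ.div_const 2))
    exact (Complex.continuous_ofReal.tendsto _).comp hreal |>.neg
  have hevaltend : ∀ z : ℂ, Filter.Tendsto (fun k => (Ps S M D a (s (φ k))).eval z)
      atTop (nhds ((Ps S M D a s0).eval z)) := by
    intro z
    simp only [evalPs]
    refine Filter.Tendsto.sub (Filter.Tendsto.sub tendsto_const_nhds ?_) ?_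
    · exact (((Complex.continuous_ofReal.tendsto _).comp
        (tendsto_const_nhds.sub hsφ)).mul_const _)
    · exact (((Complex.continuous_ofReal.tendsto _).comp (hsφ.div_const 2)).mul_const _)
  have hprod : ∀ z : ℂ, (Ps S M D a s0).eval z = lc0 * ∏ j, (z - v j) := by
    intro z
    refine tendsto_nhds_unique (hevaltend z) ?_
    have h2 : Filter.Tendsto (fun k => (Ps S M D a (s (φ k))).leadingCoeff
        * ∏ j, (z - x (φ k) j)) atTop (nhds (lc0 * ∏ j, (z - v j))) := by
      refine hlctend.mul ?_
      exact tendsto_finset_prod _ fun j _ => tendsto_const_nhds.sub (hcomp j)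
    refine h2.congr fun k => ?_
    exact (eval_eq_prod _ _ (hx (φ k)) z).symm
  have hpoly : Ps S M D a s0
      = C lc0 * (Multiset.map (fun r => X - C r) ↑(List.ofFn v)).prod :=
    Polynomial.funext fun z => by rw [hprod z, eval_prod_poly]
  refine ⟨φ, hφ, v, ?_, hcomp⟩
  rw [hpoly, roots_of_prod _ hlc0]

end Conv

section End1
variable (S M D : ℕ) (a : ℕ → ℝ)

lemma N_one (hSD : S < D) :
    Multiset.card ((Ps S M D a 1).roots.filter (fun z => Complex.abs z < 1)) = S := by
  have h1 : Ps S M D a 1 = X ^ S - C (1/2 : ℂ) * X ^ D := by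
    simp [Ps]
  have hXD : (X : Polynomial ℂ) ^ D = X ^ S * X ^ (D - S) := by
    rw [← pow_add]; congr 1; omega
  have h2 : (X : Polynomial ℂ) ^ S - C (1/2:ℂ) * X ^ D
      = C (-(1/2):ℂ) * (X ^ S * (X ^ (D-S) - C 2)) := by
    have hCC : (C (1/2:ℂ)) * C 2 = 1 := by rw [← C_mul]; norm_num
    rw [map_neg]
    linear_combination (-(C (1/2:ℂ))) * hXD - (X : Polynomial ℂ) ^ S * hCC
  have hne1 : ((X : Polynomial ℂ) ^ S : Polynomial ℂ) ≠ 0 := pow_ne_zero _ X_ne_zero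
  have hne2 : ((X : Polynomial ℂ) ^ (D-S) - C 2) ≠ 0 :=
    X_pow_sub_C_ne_zero (by omega) 2
  rw [h1, h2, roots_C_mul _ (by norm_num), roots_mul (mul_ne_zero hne1 hne2),
    roots_pow, roots_X, Multiset.filter_add, Multiset.card_add]
  have hc1 : Multiset.filter (fun z => Complex.abs z < 1) (S • ({0} : Multiset ℂ))
      = S • ({0} : Multiset ℂ) := by
    refine Multiset.filter_eq_self.mpr fun z hz => ?_
    have : z = 0 := by
      rcases Multiset.mem_nsmul.mp hz with ⟨-, h⟩
      simpa using h
    simp [this]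
  have hc2 : Multiset.filter (fun z => Complex.abs z < 1)
      ((X ^ (D-S) - C 2 : Polynomial ℂ).roots) = 0 := by
    refine Multiset.filter_eq_nil.mpr fun z hz => ?_
    have heval : (X ^ (D-S) - C 2 : Polynomial ℂ).eval z = 0 := (mem_roots hne2).1 hz
    rw [eval_sub, eval_pow, eval_X, eval_C, sub_eq_zero] at heval
    intro hlt
    have h3 : Complex.abs (z ^ (D - S)) = 2 := by rw [heval]; simp
    rw [map_pow] at h3
    have : Complex.abs z ^ (D - S) ≤ 1 :=
      pow_le_one₀ (Complex.abs.nonneg z) (le_of_lt hlt)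
    linarith
  rw [hc1, hc2]
  simp

end End1

section Align
variable (S M : ℕ) (a : ℕ → ℝ)

lemma unit_re_one {u : ℂ} (h1 : Complex.abs u = 1) (h2 : u.re = 1) : u = 1 := by
  have hsq := Complex.sq_abs u
  rw [Complex.normSq_apply, h1, h2] at hsq
  have him : u.im = 0 := by nlinarith
  exact Complex.ext (by simp [h2]) (by simp [him])

lemma align (ha_nonneg : ∀ i ∈ Finset.range (M + 1), 0 ≤ a i)
    (ha_sum : ∑ i ∈ Finset.range (M + 1), a i = 1)
    {z0 : ℂ} (habs : Complex.abs z0 = 1)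
    (hroot : z0 ^ S = ∑ i ∈ Finset.range (M+1), (a i : ℂ) * z0 ^ i) :
    ∀ i ∈ Finset.range (M+1), a i ≠ 0 → z0 ^ i = z0 ^ S := by
  have habs_pow : ∀ k : ℕ, Complex.abs (z0 ^ k) = 1 := fun k => by
    rw [map_pow, habs, one_pow]
  have hconj : (starRingEnd ℂ) (z0 ^ S) * z0 ^ S = 1 := by
    rw [mul_comm, Complex.mul_conj]
    rw [← Complex.sq_abs, habs_pow]
    norm_num
  have hone : (1 : ℂ) = ∑ i ∈ Finset.range (M+1),
      (a i : ℂ) * ((starRingEnd ℂ) (z0 ^ S) * z0 ^ i) := by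
    calc (1:ℂ) = (starRingEnd ℂ) (z0 ^ S) * z0 ^ S := hconj.symm
    _ = (starRingEnd ℂ) (z0 ^ S) * ∑ i ∈ Finset.range (M+1), (a i : ℂ) * z0 ^ i := by
        rw [← hroot]
    _ = ∑ i ∈ Finset.range (M+1), (a i : ℂ) * ((starRingEnd ℂ) (z0 ^ S) * z0 ^ i) := by
        rw [Finset.mul_sum]
        exact Finset.sum_congr rfl fun i _ => by ring
  set c : ℕ → ℝ := fun i => ((starRingEnd ℂ) (z0 ^ S) * z0 ^ i).re with hcdef
  have hre : (1 : ℝ) = ∑ i ∈ Finset.range (M+1), a i * c i := by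
    have := congrArg Complex.re hone
    rw [Complex.re_sum] at this
    simp only [Complex.re_ofReal_mul, Complex.one_re] at this
    exact this
  have hcle : ∀ i, c i ≤ 1 := by
    intro i
    have h1 : c i ≤ Complex.abs ((starRingEnd ℂ) (z0 ^ S) * z0 ^ i) := Complex.re_le_abs _
    rw [map_mul, Complex.abs_conj, habs_pow, habs_pow, mul_one] at h1
    exact h1
  have hzero : ∑ i ∈ Finset.range (M+1), a i * (1 - c i) = 0 := by
    have e : ∀ i ∈ Finset.range (M+1), a i * (1 - c i) = a i - a i * c i :=
      fun i _ => by ring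
    rw [Finset.sum_congr rfl e, Finset.sum_sub_distrib, ha_sum, ← hre, sub_self]
  intro i hi hai
  have h0 : a i * (1 - c i) = 0 :=
    (Finset.sum_eq_zero_iff_of_nonneg
      (fun j hj => mul_nonneg (ha_nonneg j hj) (by linarith [hcle j]))).mp hzero i hi
  have hci : c i = 1 := by
    rcases mul_eq_zero.mp h0 with h | h
    · exact absurd h hai
    · linarith
  have huni : (starRingEnd ℂ) (z0 ^ S) * z0 ^ i = 1 :=
    unit_re_one (by rw [map_mul, Complex.abs_conj, habs_pow, habs_pow, mul_one]) hci
  calc z0 ^ i = ((starRingEnd ℂ) (z0 ^ S) * z0 ^ S) * z0 ^ i := by rw [hconj, one_mul]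
  _ = z0 ^ S * ((starRingEnd ℂ) (z0 ^ S) * z0 ^ i) := by ring
  _ = z0 ^ S := by rw [huni, mul_one]

end Align

section Push
variable (S M D : ℕ) (a : ℕ → ℝ)

lemma evalP0 (z : ℂ) : (Ps S M D a 0).eval z
    = z ^ S - ∑ i ∈ Finset.range (M+1), (a i : ℂ) * z ^ i := by
  rw [evalPs]
  norm_num

lemma boundary_push (hS : 1 ≤ S) (hSD : S < D) (hDM : D ≤ M) (haD : 0 < a D)
    (ha_nonneg : ∀ i ∈ Finset.range (M + 1), 0 ≤ a i)
    (ha_sum : ∑ i ∈ Finset.range (M + 1), a i = 1)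
    (ha_mean : ∑ i ∈ Finset.range (M + 1), (i : ℝ) * a i < S)
    {z0 : ℂ} (hz0 : Complex.abs z0 = 1)
    (hz0r : (Ps S M D a 0).eval z0 = 0)
    (t : ℕ → ℝ) (ht0 : ∀ k, 0 < t k)
    (r : ℕ → ℂ) (hr : ∀ k, (Ps S M D a (t k)).eval (r k) = 0)
    (hrt : Filter.Tendsto r atTop (nhds z0)) :
    ∀ᶠ k in atTop, Complex.abs (r k) < 1 := by
  set m : ℝ := ∑ i ∈ Finset.range (M + 1), (i : ℝ) * a i with hmdef
  have hm : m < S := ha_mean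
  have hz0ne : z0 ≠ 0 := by
    intro h; rw [h] at hz0; simp at hz0
  have hz0S : z0 ^ S = ∑ i ∈ Finset.range (M+1), (a i : ℂ) * z0 ^ i := by
    have := evalP0 S M D a z0
    rw [hz0r] at this
    exact sub_eq_zero.mp this.symm
  have halign := align S M a ha_nonneg ha_sum hz0 hz0S
  -- the quotient polynomial
  set P : Polynomial ℂ := Ps S M D a 0 with hPdef
  set Q : Polynomial ℂ := P /ₘ (X - C z0) with hQdef
  have hfac : (X - C z0) * Q = P := mul_divByMonic_eq_iff_isRoot.mpr hz0r
  have hQz0 : Q.eval z0 = (derivative P).eval z0 := by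
    have := congrArg derivative hfac
    rw [derivative_mul, derivative_sub, derivative_X, derivative_C, sub_zero, one_mul] at this
    have := congrArg (eval z0) this
    rw [eval_add, eval_mul, eval_sub, eval_X, eval_C, sub_self, zero_mul, add_zero] at this
    exact this
  -- derivative value
  have hderiv : z0 * (derivative P).eval z0 = (((S : ℝ) - m : ℝ) : ℂ) * z0 ^ S := by
    have hPeq : P = X ^ S - PA M a := Ps_zero S M D a
    rw [hPeq, derivative_sub]
    rw [derivative_X_pow]
    have hdPA : derivative (PA M a) = ∑ i ∈ Finset.range (M+1),
        C ((a i : ℂ)) * (C (i:ℂ) * X ^ (i-1)) := by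
      rw [PA, derivative_sum]
      exact Finset.sum_congr rfl fun i _ => by rw [derivative_C_mul, derivative_X_pow]
    rw [hdPA, eval_sub, eval_mul, eval_C, eval_pow, eval_X, eval_finset_sum]
    simp only [eval_mul, eval_C, eval_pow, eval_X]
    rw [mul_sub, Finset.mul_sum]
    have e1 : z0 * ((S:ℂ) * z0 ^ (S-1)) = (S:ℂ) * z0 ^ S := by
      rw [show z0 * ((S:ℂ) * z0 ^ (S-1)) = (S:ℂ) * (z0 ^ (S-1) * z0) by ring, ← pow_succ]
      congr 2
      omega
    have e2 : ∀ i ∈ Finset.range (M+1),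
        z0 * ((a i : ℂ) * ((i:ℂ) * z0 ^ (i-1))) = ((i:ℝ) * a i : ℝ) * z0 ^ S := by
      intro i hi
      by_cases hai : a i = 0
      · simp [hai]
      by_cases hi0 : i = 0
      · subst hi0; simp
      have hp : z0 ^ (i-1) * z0 = z0 ^ i := by
        rw [← pow_succ]; congr 1; omega
      have : z0 * ((a i : ℂ) * ((i:ℂ) * z0 ^ (i-1))) = (a i : ℂ) * (i:ℂ) * (z0 ^ (i-1) * z0) := by
        ring
      rw [this, hp, halign i hi hai]
      push_cast
      ring
    rw [Finset.sum_congr rfl e2, ← Finset.sum_mul, e1]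
    have hsm : ∑ i ∈ Finset.range (M+1), (((i:ℝ) * a i : ℝ) : ℂ) = ((m : ℝ) : ℂ) := by
      rw [hmdef]
      push_cast
      ring
    rw [hsm]
    push_cast
    ring
  have hQne : Q.eval z0 ≠ 0 := by
    intro h
    rw [hQz0] at h
    rw [h, mul_zero] at hderiv
    have hzS : z0 ^ S ≠ 0 := pow_ne_zero _ hz0ne
    have : (((S : ℝ) - m : ℝ) : ℂ) = 0 := by
      rcases mul_eq_zero.mp hderiv.symm with h' | h'
      · exact h'
      · exact absurd h' hzS
    have : (S : ℝ) - m = 0 := by exact_mod_cast this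
    linarith
  -- G polynomial
  set Gp : Polynomial ℂ := C (1/2 : ℂ) * X ^ D - PA M a with hGdef
  have hGeval : ∀ w, Gp.eval w = (1/2 : ℂ) * w ^ D
      - ∑ i ∈ Finset.range (M+1), (a i : ℂ) * w ^ i := by
    intro w
    rw [hGdef, eval_sub, eval_mul, eval_C, eval_pow, eval_X, evalA]
  have hGz0 : Gp.eval z0 = -(1/2 : ℂ) * z0 ^ S := by
    rw [hGeval, ← hz0S, halign D (by simp [Nat.lt_succ_iff, hDM]) (ne_of_gt haD)]
    ring
  -- key identity
  have hkey : ∀ k, (r k - z0) * Q.eval (r k) = ((t k : ℝ) : ℂ) * Gp.eval (r k) := by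
    intro k
    have hL : (r k - z0) * Q.eval (r k) = P.eval (r k) := by
      conv_rhs => rw [← hfac]
      rw [eval_mul, eval_sub, eval_X, eval_C]
    rw [hL]
    have e0 := evalP0 S M D a (r k)
    have et := evalPs S M D a (t k) (r k)
    have hrk := hr k
    rw [et] at hrk
    rw [hPdef, e0, hGeval]
    push_cast at hrk ⊢
    linear_combination hrk
  -- limits
  have hcont : ∀ (p : Polynomial ℂ), Filter.Tendsto (fun k => p.eval (r k)) atTop
      (nhds (p.eval z0)) := fun p => (p.continuous_aeval.tendsto z0).comp hrt
  have hQtend := hcont Q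
  have hGtend := hcont Gp
  have hQev : ∀ᶠ k in atTop, Q.eval (r k) ≠ 0 := hQtend.eventually_ne hQne
  set L : ℂ := Gp.eval z0 / Q.eval z0 with hLdef
  set u : ℕ → ℂ := fun k => (r k - z0) / ((t k : ℝ) : ℂ) with hudef
  have hueq : ∀ᶠ k in atTop, u k = Gp.eval (r k) / Q.eval (r k) := by
    filter_upwards [hQev] with k hk
    have htne : ((t k : ℝ) : ℂ) ≠ 0 := by
      exact_mod_cast ne_of_gt (ht0 k)
    rw [hudef]
    rw [div_eq_div_iff htne hk]
    linear_combination hkey k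
  have hutend : Filter.Tendsto u atTop (nhds L) := by
    refine Filter.Tendsto.congr' ?_ (hGtend.div hQtend hQne)
    filter_upwards [hueq] with k h
    exact h.symm
  -- compute the direction constant
  have hz0conj : (starRingEnd ℂ) z0 * z0 = 1 := by
    rw [mul_comm, Complex.mul_conj]
    have : Complex.normSq z0 = 1 := by rw [← Complex.sq_abs, hz0]; norm_num
    rw [this]
    norm_num
  have hSmne : (S : ℝ) - m ≠ 0 := ne_of_gt (by linarith)
  have hccne : ((((S:ℝ) - m : ℝ)) : ℂ) ≠ 0 := Complex.ofReal_ne_zero.mpr hSmne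
  have hQval : z0 * Q.eval z0 = ((((S:ℝ) - m : ℝ)) : ℂ) * z0 ^ S := by
    rw [hQz0]; exact hderiv
  have hE : (starRingEnd ℂ) z0 * L = ((-(1/2) / ((S:ℝ) - m) : ℝ) : ℂ) := by
    rw [hLdef, hGz0]
    rw [eq_comm]
    rw [Complex.ofReal_div]
    rw [mul_div_assoc']
    rw [div_eq_div_iff hccne hQne]
    have hQval' := hQval
    push_cast at hQval' ⊢
    linear_combination ((-(1:ℂ))/2) * (starRingEnd ℂ) z0 * hQval'
      + ((1:ℂ)/2) * (eval z0 Q) * hz0conj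
  -- main limit of (normSq r - 1)/t
  have hFmain : ∀ k, (Complex.normSq (r k) - 1) / t k
      = 2 * (z0 * (starRingEnd ℂ) (u k)).re + (u k * (starRingEnd ℂ) (r k - z0)).re := by
    intro k
    have htne : t k ≠ 0 := ne_of_gt (ht0 k)
    have hnz0 : Complex.normSq z0 = 1 := by rw [← Complex.sq_abs, hz0]; norm_num
    have h1 : Complex.normSq (r k) = 1 + Complex.normSq (r k - z0)
        + 2 * (z0 * (starRingEnd ℂ) (r k - z0)).re := by
      have := Complex.normSq_add z0 (r k - z0)
      rw [hnz0] at this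
      have heq : z0 + (r k - z0) = r k := by ring
      rw [heq] at this
      linarith
    have hre1 : (z0 * (starRingEnd ℂ) (r k - z0)).re / t k = (z0 * (starRingEnd ℂ) (u k)).re := by
      rw [hudef]
      simp only []
      rw [map_div₀, Complex.conj_ofReal, mul_div_assoc', Complex.div_ofReal_re]
    have hre2 : Complex.normSq (r k - z0) / t k
        = (u k * (starRingEnd ℂ) (r k - z0)).re := by
      rw [hudef]
      simp only []
      rw [div_mul_eq_mul_div, Complex.mul_conj, ← Complex.ofReal_div]
      rw [Complex.ofReal_re]
    rw [h1, ← hre1, ← hre2]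
    field_simp
    ring
  have hwtend : Filter.Tendsto (fun k => r k - z0) atTop (nhds 0) := by
    have := hrt.sub_const z0
    rwa [sub_self] at this
  have hlim2 : Filter.Tendsto (fun k => (Complex.normSq (r k) - 1) / t k) atTop
      (nhds (2 * (z0 * (starRingEnd ℂ) L).re + (L * (starRingEnd ℂ) (0:ℂ)).re)) := by
    refine Filter.Tendsto.congr (fun k => (hFmain k).symm) ?_
    have hconjtendL : Filter.Tendsto (fun k => (starRingEnd ℂ) (u k)) atTop
        (nhds ((starRingEnd ℂ) L)) := (Complex.continuous_conj.tendsto L).comp hutend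
    have hconjtendW : Filter.Tendsto (fun k => (starRingEnd ℂ) (r k - z0)) atTop
        (nhds ((starRingEnd ℂ) (0:ℂ))) := (Complex.continuous_conj.tendsto 0).comp hwtend
    refine Filter.Tendsto.add ?_ ?_
    · have h1 : Filter.Tendsto (fun k => (z0 * (starRingEnd ℂ) (u k)).re) atTop
          (nhds ((z0 * (starRingEnd ℂ) L).re)) :=
        (Complex.continuous_re.tendsto _).comp (tendsto_const_nhds.mul hconjtendL)
      exact h1.const_mul 2
    · exact (Complex.continuous_re.tendsto _).comp (hutend.mul hconjtendW)
  have hneg : 2 * (z0 * (starRingEnd ℂ) L).re + (L * (starRingEnd ℂ) (0:ℂ)).re < 0 := by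
    have h0 : (L * (starRingEnd ℂ) (0:ℂ)) = 0 := by simp
    have hzL : z0 * (starRingEnd ℂ) L = ((-(1/2)/((S:ℝ)-m) : ℝ):ℂ) := by
      calc z0 * (starRingEnd ℂ) L = (starRingEnd ℂ) ((starRingEnd ℂ) z0 * L) := by
            rw [map_mul, Complex.conj_conj]
      _ = (starRingEnd ℂ) (((-(1/2)/((S:ℝ)-m) : ℝ):ℂ)) := by rw [hE]
      _ = ((-(1/2)/((S:ℝ)-m) : ℝ):ℂ) := Complex.conj_ofReal _
    rw [h0, hzL, Complex.ofReal_re, Complex.zero_re]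
    have : -(1/2)/((S:ℝ)-m) < 0 :=
      div_neg_of_neg_of_pos (by norm_num) (by linarith)
    linarith
  have hev := hlim2.eventually_lt_const hneg
  filter_upwards [hev] with k hk
  have htk := ht0 k
  have hnsq : Complex.normSq (r k) < 1 := by
    by_contra hge
    push_neg at hge
    have : 0 ≤ (Complex.normSq (r k) - 1) / t k :=
      div_nonneg (by linarith) (le_of_lt htk)
    linarith
  have habs := Complex.sq_abs (r k)
  by_contra hge
  push_neg at hge
  have : 1 ≤ Complex.abs (r k) ^ 2 := one_le_pow₀ hge
  rw [habs] at this
  linarith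

end Push

section Const
variable (S M D : ℕ) (a : ℕ → ℝ)

lemma N_local (hSD : S < D) (hDM : D ≤ M) (haD : 0 < a D)
    (hhi : ∀ i, D < i → i ≤ M → a i = 0)
    (ha_nonneg : ∀ i ∈ Finset.range (M + 1), 0 ≤ a i)
    (ha_sum : ∑ i ∈ Finset.range (M + 1), a i = 1)
    {s0 : ℝ} (hs0 : 0 < s0) (hs01 : s0 ≤ 1) :
    ∃ ε > 0, ∀ s, 0 < s → s ≤ 1 → |s - s0| < ε →
      Multiset.card ((Ps S M D a s).roots.filter (fun z => Complex.abs z < 1))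
        = Multiset.card ((Ps S M D a s0).roots.filter (fun z => Complex.abs z < 1)) := by
  by_contra hcon
  push_neg at hcon
  choose f hf1 hf2 hf3 hf4 using fun n : ℕ => hcon (1/(n+1)) (by positivity)
  have hftend : Filter.Tendsto f atTop (nhds s0) := by
    rw [tendsto_iff_dist_tendsto_zero]
    refine squeeze_zero (fun n => dist_nonneg) (fun n => ?_)
      tendsto_one_div_add_atTop_nhds_zero_nat
    rw [Real.dist_eq]
    exact le_of_lt (hf3 n)
  choose x hxv using fun n => exists_vector
    (card_roots_Ps S M D a hSD hDM haD hhi (le_of_lt (hf1 n)) (hf2 n))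
  obtain ⟨φ, hφ, v, hv, htend⟩ := key_conv S M D a hSD hDM haD hhi ha_nonneg ha_sum
    f (fun n => ⟨le_of_lt (hf1 n), hf2 n⟩) (le_of_lt hs0) hs01 hftend x hxv
  have hvne1 : ∀ j, Complex.abs (v j) ≠ 1 := by
    intro j
    refine no_circle_roots S M D a ha_nonneg ha_sum hs0 hs01 ?_
    refine (mem_roots (Ps_ne_zero S M D a hSD hDM haD hhi (le_of_lt hs0) hs01)).1 ?_
    rw [hv]
    exact mem_ofFn' v j
  have hiff : ∀ j : Fin D, ∀ᶠ k in atTop,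
      (Complex.abs (x (φ k) j) < 1 ↔ Complex.abs (v j) < 1) := by
    intro j
    have habs : Filter.Tendsto (fun k => Complex.abs (x (φ k) j)) atTop
        (nhds (Complex.abs (v j))) := (Complex.continuous_abs.tendsto _).comp (htend j)
    rcases lt_or_gt_of_ne (hvne1 j) with h | h
    · filter_upwards [habs.eventually_lt_const h] with k hk
      exact iff_of_true hk h
    · filter_upwards [habs.eventually_const_lt h] with k hk
      exact iff_of_false (not_lt.mpr (le_of_lt hk)) (not_lt.mpr (le_of_lt h))
  obtain ⟨k, hk⟩ := (Filter.eventually_all.2 hiff).exists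
  apply hf4 (φ k)
  rw [hxv (φ k), hv, count_filter_ofFn, count_filter_ofFn]
  exact congrArg Finset.card (Finset.filter_congr fun j _ => hk j)

lemma N_all (hS : 1 ≤ S) (hSD : S < D) (hDM : D ≤ M) (haD : 0 < a D)
    (hhi : ∀ i, D < i → i ≤ M → a i = 0)
    (ha_nonneg : ∀ i ∈ Finset.range (M + 1), 0 ≤ a i)
    (ha_sum : ∑ i ∈ Finset.range (M + 1), a i = 1)
    {s0 : ℝ} (hs0 : 0 < s0) (hs01 : s0 ≤ 1) :
    Multiset.card ((Ps S M D a s0).roots.filter (fun z => Complex.abs z < 1)) = S := by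
  classical
  set g : ℝ → ℕ := fun s =>
    Multiset.card ((Ps S M D a s).roots.filter (fun z => Complex.abs z < 1)) with hgdef
  suffices h : g s0 = g 1 by
    rw [hgdef] at h
    simp only at h
    rw [h]
    exact N_one S M D a hSD
  have hloc : ∀ s', ∃ ε, 0 < ε ∧ (0 < s' → s' ≤ 1 → ∀ s, 0 < s → s ≤ 1 → |s - s'| < ε
      → g s = g s') := by
    intro s'
    by_cases h : 0 < s' ∧ s' ≤ 1
    · obtain ⟨ε, hε, hp⟩ := N_local S M D a hSD hDM haD hhi ha_nonneg ha_sum h.1 h.2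
      exact ⟨ε, hε, fun _ _ => hp⟩
    · exact ⟨1, one_pos, fun h1 h2 => absurd ⟨h1, h2⟩ h⟩
  choose ε hε hloc using hloc
  by_contra hne
  set u : Set ℝ := ⋃ (i : ℝ) (_ : i ∈ Set.Ioc (0:ℝ) 1 ∧ g i = g 1), Metric.ball i (ε i) with hudef
  set w : Set ℝ := ⋃ (i : ℝ) (_ : i ∈ Set.Ioc (0:ℝ) 1 ∧ g i ≠ g 1), Metric.ball i (ε i) with hwdef
  have hu : IsOpen u := isOpen_biUnion fun _ _ => Metric.isOpen_ball
  have hw : IsOpen w := isOpen_biUnion fun _ _ => Metric.isOpen_ball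
  have hcover : Set.Ioc (0:ℝ) 1 ⊆ u ∪ w := by
    intro tt htt
    by_cases h : g tt = g 1
    · exact Or.inl (Set.mem_biUnion ⟨htt, h⟩ (Metric.mem_ball_self (hε tt)))
    · exact Or.inr (Set.mem_biUnion ⟨htt, h⟩ (Metric.mem_ball_self (hε tt)))
  have h1mem : (1:ℝ) ∈ Set.Ioc (0:ℝ) 1 := ⟨one_pos, le_refl 1⟩
  have hs0mem : s0 ∈ Set.Ioc (0:ℝ) 1 := ⟨hs0, hs01⟩
  have hnon1 : (Set.Ioc (0:ℝ) 1 ∩ u).Nonempty :=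
    ⟨1, h1mem, Set.mem_biUnion ⟨h1mem, rfl⟩ (Metric.mem_ball_self (hε 1))⟩
  have hnon2 : (Set.Ioc (0:ℝ) 1 ∩ w).Nonempty :=
    ⟨s0, hs0mem, Set.mem_biUnion ⟨hs0mem, hne⟩ (Metric.mem_ball_self (hε s0))⟩
  obtain ⟨y, hyIoc, hyu, hyw⟩ := isPreconnected_Ioc u w hu hw hcover hnon1 hnon2
  obtain ⟨t1, ht1, hb1⟩ := Set.mem_iUnion₂.mp hyu
  obtain ⟨t2, ht2, hb2⟩ := Set.mem_iUnion₂.mp hyw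
  have e1 : g y = g t1 := hloc t1 ht1.1.1 ht1.1.2 y hyIoc.1 hyIoc.2
    (by rw [← Real.dist_eq]; exact Metric.mem_ball.mp hb1)
  have e2 : g y = g t2 := hloc t2 ht2.1.1 ht2.1.2 y hyIoc.1 hyIoc.2
    (by rw [← Real.dist_eq]; exact Metric.mem_ball.mp hb2)
  exact ht2.2 (by rw [← e2, e1, ht1.2])

end Const

section Final
variable (S M D : ℕ) (a : ℕ → ℝ)

lemma hard_case (hS : 1 ≤ S) (hSD : S < D) (hDM : D ≤ M) (haD : 0 < a D)
    (hhi : ∀ i, D < i → i ≤ M → a i = 0)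
    (ha_nonneg : ∀ i ∈ Finset.range (M + 1), 0 ≤ a i)
    (ha_sum : ∑ i ∈ Finset.range (M + 1), a i = 1)
    (ha_mean : ∑ i ∈ Finset.range (M + 1), (i : ℝ) * a i < S) :
    Multiset.card (((X ^ S - PA M a).roots).filter (fun z => Complex.abs z ≤ 1)) = S := by
  set f : ℕ → ℝ := fun n => 1/(n+1) with hfdef
  have hf1 : ∀ n : ℕ, 0 < f n := fun n => by positivity
  have hf2 : ∀ n : ℕ, f n ≤ 1 := fun n => by
    rw [hfdef]
    simp only []
    rw [div_le_one (by positivity)]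
    linarith [Nat.cast_nonneg (α := ℝ) n]
  have hftend : Filter.Tendsto f atTop (nhds 0) := tendsto_one_div_add_atTop_nhds_zero_nat
  choose x hxv using fun n => exists_vector
    (card_roots_Ps S M D a hSD hDM haD hhi (le_of_lt (hf1 n)) (hf2 n))
  obtain ⟨φ, hφ, v, hv, htend⟩ := key_conv S M D a hSD hDM haD hhi ha_nonneg ha_sum
    f (fun n => ⟨le_of_lt (hf1 n), hf2 n⟩) (le_refl 0) zero_le_one hftend x hxv
  rw [← Ps_zero S M D a, hv, count_filter_ofFn]
  have hiff : ∀ j : Fin D, ∀ᶠ k in atTop,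
      (Complex.abs (x (φ k) j) < 1 ↔ Complex.abs (v j) ≤ 1) := by
    intro j
    have habs : Filter.Tendsto (fun k => Complex.abs (x (φ k) j)) atTop
        (nhds (Complex.abs (v j))) := (Complex.continuous_abs.tendsto _).comp (htend j)
    have hre : ∀ k, (Ps S M D a (f (φ k))).eval (x (φ k) j) = 0 := by
      intro k
      refine (mem_roots (Ps_ne_zero S M D a hSD hDM haD hhi
        (le_of_lt (hf1 (φ k))) (hf2 (φ k)))).1 ?_
      rw [hxv (φ k)]
      exact mem_ofFn' _ j
    rcases lt_trichotomy (Complex.abs (v j)) 1 with h | h | h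
    · filter_upwards [habs.eventually_lt_const h] with k hk
      exact iff_of_true hk (le_of_lt h)
    · have hz0r : (Ps S M D a 0).eval (v j) = 0 := by
        refine (mem_roots (Ps_ne_zero S M D a hSD hDM haD hhi (le_refl 0) zero_le_one)).1 ?_
        rw [hv]
        exact mem_ofFn' v j
      have hev := boundary_push S M D a hS hSD hDM haD ha_nonneg ha_sum ha_mean h hz0r
        (fun k => f (φ k)) (fun k => hf1 (φ k)) (fun k => x (φ k) j) hre (htend j)
      filter_upwards [hev] with k hk
      exact iff_of_true hk (le_of_eq h)
    · filter_upwards [habs.eventually_const_lt h] with k hk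
      exact iff_of_false (not_lt.mpr (le_of_lt hk)) (not_le.mpr h)
  obtain ⟨k, hk⟩ := (Filter.eventually_all.2 hiff).exists
  have hNk := N_all S M D a hS hSD hDM haD hhi ha_nonneg ha_sum
    (hf1 (φ k)) (hf2 (φ k))
  rw [hxv (φ k), count_filter_ofFn] at hNk
  rw [← hNk]
  exact (congrArg Finset.card (Finset.filter_congr fun j _ => hk j)).symm

end Final
end RD

open RD in
/-- For S ≥ 1, nonnegative a_0,…,a_M summing to 1 with mean Σ i·a_i < S,
the polynomial P(z) = z^S − Σ_{i=0}^{M} a_i z^i has exactly S roots (with multiplicity)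
in the closed unit disc of ℂ. -/
theorem roots_in_closed_unit_disc
    (S M : ℕ) (hS : 1 ≤ S) (a : ℕ → ℝ)
    (ha_nonneg : ∀ i ∈ Finset.range (M + 1), 0 ≤ a i)
    (ha_sum : ∑ i ∈ Finset.range (M + 1), a i = 1)
    (ha_mean : ∑ i ∈ Finset.range (M + 1), (i : ℝ) * a i < S) :
    Multiset.card
      (((X ^ S - ∑ i ∈ Finset.range (M + 1), C ((a i : ℂ)) * X ^ i : Polynomial ℂ).roots).filter
        (fun z => ‖z‖ ≤ 1)) = S := by
  classical
  by_cases hc : ∀ i ∈ Finset.range (M+1), S < i → a i = 0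
  · exact easy_case S M hS a ha_nonneg ha_sum ha_mean hc
  · push_neg at hc
    obtain ⟨i0, hi0m, hi0S, hi0⟩ := hc
    set T : Finset ℕ := (Finset.range (M+1)).filter (fun i => a i ≠ 0) with hTdef
    have hTne : T.Nonempty := ⟨i0, Finset.mem_filter.mpr ⟨hi0m, hi0⟩⟩
    set D : ℕ := T.max' hTne with hDdef
    have hDT : D ∈ T := Finset.max'_mem T hTne
    have haD : a D ≠ 0 := (Finset.mem_filter.mp hDT).2
    have hDM : D ≤ M := by
      have := (Finset.mem_filter.mp hDT).1
      simp only [Finset.mem_range] at this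
      omega
    have hSD : S < D := lt_of_lt_of_le hi0S
      (Finset.le_max' T i0 (Finset.mem_filter.mpr ⟨hi0m, hi0⟩))
    have hhi : ∀ i, D < i → i ≤ M → a i = 0 := by
      intro i hDi hiM
      by_contra hne
      have : i ∈ T := Finset.mem_filter.mpr ⟨by simp [Nat.lt_succ_iff, hiM], hne⟩
      exact absurd (Finset.le_max' T i this) (by omega)
    have haDpos : 0 < a D :=
      lt_of_le_of_ne (ha_nonneg D (by simp [Nat.lt_succ_iff, hDM])) (Ne.symm haD)
    exact hard_case S M D a hS hSD hDM haDpos hhi ha_nonneg ha_sum ha_mean
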